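/- Let R = M₂(F_q). Then |{(a,b) ∈ R × R : a*b = 0}| = q⁴ + q(q³ - q² - q + 1) + q²(q³ + q² - q - 1), and consequently P_l(R) := |{(a,b) : ab = 0}|/|R|² = (q⁴ + 3q³ - 2q² - 2q + 1)/q⁷. -/

import Mathlib

noncomputable def zeroProb (R : Type*) [Ring R] : ℚ :=
  (Nat.card {p : R × R // p.1 * p.2 = 0} : ℚ) / (Nat.card R : ℚ) ^ 2

section Aux

variable {F : Type*} [Field F] [Fintype F] [DecidableEq F]

open Matrix

local notation "M2" => Matrix (Fin 2) (Fin 2) F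

/-- cardinality of the left null space of `b` -/
lemma card_ker_vecMul (b : M2) :
    Fintype.card {v : Fin 2 → F // v ᵥ* b = 0} =
      if b = 0 then Fintype.card F ^ 2
      else if b.det ≠ 0 then 1 else Fintype.card F := by
  classical
  have hcard : Fintype.card {v : Fin 2 → F // v ᵥ* b = 0}
      = Fintype.card (LinearMap.ker b.vecMulLinear) := by
    apply Fintype.card_congr
    exact Equiv.subtypeEquivRight (fun v => by
      simp [LinearMap.mem_ker, Matrix.vecMulLinear_apply])
  split_ifs with h0 hdet
  · subst h0
    rw [hcard]
    rw [show (Fintype.card F ^ 2) = Fintype.card (Fin 2 → F) by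
      simp [Fintype.card_fun]]
    apply Fintype.card_congr
    refine (Equiv.subtypeUnivEquiv ?_)
    intro v
    simp [LinearMap.mem_ker, Matrix.vecMulLinear_apply, Matrix.vecMul_zero]
  · -- b invertible: kernel trivial
    rw [Fintype.card_eq_one_iff]
    refine ⟨⟨0, by simp [Matrix.zero_vecMul]⟩, ?_⟩
    rintro ⟨v, hv⟩
    ext
    by_contra hvne
    have hne : v ≠ 0 := fun h => hvne (by simp [h])
    exact hdet (Matrix.exists_vecMul_eq_zero_iff.mp ⟨v, hne, hv⟩)
  · -- b ≠ 0, det b = 0 : kernel has dimension 1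
    push_neg at hdet
    rw [hcard]
    have hfin : Module.finrank F (LinearMap.ker b.vecMulLinear) = 1 := by
      have htop : Module.finrank F (Fin 2 → F) = 2 := by
        simp [Module.finrank_fintype_fun_eq_card]
      have hne_bot : LinearMap.ker b.vecMulLinear ≠ ⊥ := by
        obtain ⟨v, hv, hv0⟩ := Matrix.exists_vecMul_eq_zero_iff.mpr hdet
        intro hbot
        have : v ∈ LinearMap.ker b.vecMulLinear := by
          simp [LinearMap.mem_ker, Matrix.vecMulLinear_apply, hv0]
        rw [hbot, Submodule.mem_bot] at this
        exact hv this
      have hne_top : LinearMap.ker b.vecMulLinear ≠ ⊤ := by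
        intro htop'
        apply h0
        ext i j
        have : Pi.single i (1 : F) ∈ LinearMap.ker b.vecMulLinear := by
          rw [htop']; trivial
        rw [LinearMap.mem_ker, Matrix.vecMulLinear_apply] at this
        have := congrFun this j
        simpa using this
      have h1 : 0 < Module.finrank F (LinearMap.ker b.vecMulLinear) := by
        rcases Nat.eq_zero_or_pos (Module.finrank F (LinearMap.ker b.vecMulLinear))
          with h | h
        · exact absurd (Submodule.finrank_eq_zero.mp h) hne_bot
        · exact h
      have h2 : Module.finrank F (LinearMap.ker b.vecMulLinear) < 2 := by
        have := Submodule.finrank_lt (K := F) (V := Fin 2 → F)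
          hne_top
        omega
      omega
    rw [Module.card_eq_pow_finrank (K := F), hfin, pow_one]

lemma card_left_ann (b : M2) :
    Fintype.card {a : M2 // a * b = 0} =
      (Fintype.card {v : Fin 2 → F // v ᵥ* b = 0}) ^ 2 := by
  classical
  rw [show (Fintype.card {v : Fin 2 → F // v ᵥ* b = 0}) ^ 2
      = Fintype.card (Fin 2 → {v : Fin 2 → F // v ᵥ* b = 0}) by
    simp [Fintype.card_fun]]
  apply Fintype.card_congr
  refine ⟨fun a i => ⟨a.1 i, ?_⟩, fun f => ⟨Matrix.of (fun i => (f i).1), ?_⟩, ?_, ?_⟩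
  · have := congrFun (congrFun a.2 i)
    funext j
    have h := congrFun (congrFun a.2 i) j
    simpa [Matrix.mul_apply, Matrix.vecMul, dotProduct] using h
  · ext i j
    have := congrFun ((f i).2) j
    simpa [Matrix.mul_apply, Matrix.vecMul, dotProduct] using this
  · rintro ⟨a, ha⟩; rfl
  · intro f; rfl

/-- number of invertible 2×2 matrices -/
lemma card_det_ne_zero :
    Fintype.card {b : M2 // b.det ≠ 0} =
      (Fintype.card F ^ 2 - 1) * (Fintype.card F ^ 2 - Fintype.card F) := by
  classical
  have e : (Matrix (Fin 2) (Fin 2) F)ˣ ≃ {b : M2 // b.det ≠ 0} := by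
    refine ⟨fun u => ⟨u.1, ?_⟩, fun b =>
      ((Matrix.isUnit_iff_isUnit_det _).mpr (isUnit_iff_ne_zero.mpr b.2)).unit,
      ?_, ?_⟩
    · have hu : IsUnit (u.1.det) := (Matrix.isUnit_iff_isUnit_det _).mp u.isUnit
      exact hu.ne_zero
    · intro u; exact Units.ext (IsUnit.unit_spec _)
    · rintro ⟨b, hb⟩; simp [IsUnit.unit_spec]
  have h := Matrix.card_GL_field (𝔽 := F) 2
  rw [Nat.card_eq_fintype_card] at h
  have : Fintype.card {b : M2 // b.det ≠ 0} = Fintype.card (GL (Fin 2) F) :=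
    (Fintype.card_congr e).symm
  rw [this, h]
  rw [Fin.prod_univ_two]
  simp [pow_zero, pow_one]

end Aux

theorem count_zero_pairs_M2 (F : Type*) [Field F] [Fintype F] :
    (Nat.card {p : Matrix (Fin 2) (Fin 2) F × Matrix (Fin 2) (Fin 2) F //
        p.1 * p.2 = 0} : ℚ) =
      (Fintype.card F : ℚ) ^ 4 +
        (Fintype.card F : ℚ) * ((Fintype.card F : ℚ) ^ 3 - (Fintype.card F : ℚ) ^ 2 -
          (Fintype.card F : ℚ) + 1) +
        (Fintype.card F : ℚ) ^ 2 * ((Fintype.card F : ℚ) ^ 3 + (Fintype.card F : ℚ) ^ 2 -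
          (Fintype.card F : ℚ) - 1) ∧
    zeroProb (Matrix (Fin 2) (Fin 2) F) =
      ((Fintype.card F : ℚ) ^ 4 + 3 * (Fintype.card F : ℚ) ^ 3 - 2 * (Fintype.card F : ℚ) ^ 2 -
        2 * (Fintype.card F : ℚ) + 1) / (Fintype.card F : ℚ) ^ 7 := by
  classical
  set q : ℕ := Fintype.card F with hq
  have hq1 : 1 ≤ q := Fintype.card_pos
  set M2 := Matrix (Fin 2) (Fin 2) F
  -- total count as a sum over b
  have hsum : Nat.card {p : M2 × M2 // p.1 * p.2 = 0}
      = ∑ b : M2, Fintype.card {a : M2 // a * b = 0} := by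
    rw [Nat.card_eq_fintype_card]
    rw [show Fintype.card {p : M2 × M2 // p.1 * p.2 = 0}
        = Fintype.card (Σ b : M2, {a : M2 // a * b = 0}) from
      Fintype.card_congr
        ⟨fun p => ⟨p.1.2, p.1.1, p.2⟩, fun s => ⟨(s.2.1, s.1), s.2.2⟩,
          fun p => rfl, fun s => rfl⟩]
    rw [Fintype.card_sigma]
  have hN : ∀ b : M2, Fintype.card {a : M2 // a * b = 0}
      = if b = 0 then q ^ 4 else if b.det ≠ 0 then 1 else q ^ 2 := by
    intro b
    rw [card_left_ann, card_ker_vecMul]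
    split_ifs <;> ring
  -- split the sum
  have hcardM2 : Fintype.card M2 = q ^ 4 := by
    have h' : Fintype.card M2 = Fintype.card (Fin 2 → Fin 2 → F) := rfl
    rw [h', Fintype.card_fun, Fintype.card_fun, Fintype.card_fin, ← hq]
    ring
  set G : ℕ := (q ^ 2 - 1) * (q ^ 2 - q) with hG
  have hGle : G ≤ q ^ 4 - 1 := by
    have h1 : q ^ 2 - 1 ≤ q ^ 2 - 1 := le_refl _
    have : G ≤ (q^2 - 1) * q^2 := Nat.mul_le_mul_left _ (Nat.sub_le _ _)
    calc G ≤ (q^2 - 1) * q^2 := this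
      _ = q^4 - q^2 := by
          rw [Nat.sub_mul, one_mul, ← pow_add]
      _ ≤ q^4 - 1 := Nat.sub_le_sub_left (by nlinarith) _
  have hGcard : (Finset.univ.filter (fun b : M2 => b.det ≠ 0)).card = G := by
    rw [← Fintype.card_subtype]
    exact card_det_ne_zero
  have hScard : (Finset.univ.filter (fun b : M2 => ¬ b.det ≠ 0)).card
      = q ^ 4 - G := by
    have := Finset.card_filter_add_card_filter_not
      (s := (Finset.univ : Finset M2)) (p := fun b => b.det ≠ 0)
    rw [Finset.card_univ, hcardM2, hGcard] at this
    omega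
  -- within singular matrices, split off b = 0
  have h0sing : (0 : M2) ∈ Finset.univ.filter (fun b : M2 => ¬ b.det ≠ 0) := by
    simp
  have hsum2 : ∑ b : M2, Fintype.card {a : M2 // a * b = 0}
      = G * 1 + (q ^ 4) + (q ^ 4 - G - 1) * q ^ 2 := by
    rw [← Finset.sum_filter_add_sum_filter_not Finset.univ (fun b : M2 => b.det ≠ 0)]
    have e1 : ∑ b ∈ Finset.univ.filter (fun b : M2 => b.det ≠ 0),
        Fintype.card {a : M2 // a * b = 0} = G * 1 := by
      rw [Finset.sum_congr rfl (fun b hb => ?_), Finset.sum_const, hGcard, smul_eq_mul]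
      rw [hN b]
      rw [Finset.mem_filter] at hb
      have hb0 : b ≠ 0 := by
        intro h; apply hb.2; rw [h]; simp
      rw [if_neg hb0, if_pos hb.2]
    have e2 : ∑ b ∈ Finset.univ.filter (fun b : M2 => ¬ b.det ≠ 0),
        Fintype.card {a : M2 // a * b = 0} = (q ^ 4) + (q ^ 4 - G - 1) * q ^ 2 := by
      rw [← Finset.add_sum_erase _ _ h0sing]
      congr 1
      · rw [hN 0, if_pos rfl]
      · rw [Finset.sum_congr rfl (fun b hb => ?_), Finset.sum_const, smul_eq_mul]
        · congr 1
          rw [Finset.card_erase_of_mem h0sing, hScard]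
        · rw [Finset.mem_erase, Finset.mem_filter] at hb
          rw [hN b, if_neg hb.1, if_neg hb.2.2]
    rw [e1, e2]
    exact (add_assoc _ _ _).symm
  have hGq : (G : ℚ) = (q : ℚ) ^ 4 - (q : ℚ) ^ 3 - (q : ℚ) ^ 2 + q := by
    rw [hG]
    have h1 : 1 ≤ q ^ 2 := Nat.one_le_pow _ _ hq1
    have h2 : q ≤ q ^ 2 := by nlinarith
    push_cast [Nat.cast_sub h1, Nat.cast_sub h2]
    ring
  have hcast : ((q ^ 4 - G - 1 : ℕ) : ℚ) = (q:ℚ) ^ 4 - (G:ℚ) - 1 := by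
    have h4 : q ^ 4 - G - 1 + (G + 1) = q ^ 4 := by
      have h6 : 1 ≤ q ^ 4 := Nat.one_le_pow _ _ hq1
      clear_value G
      clear hG
      omega
    have h5 := congrArg (Nat.cast (R := ℚ)) h4
    push_cast at h5
    linarith
  have hmain : (Nat.card {p : M2 × M2 // p.1 * p.2 = 0} : ℚ) =
      (q : ℚ) ^ 4 + (q : ℚ) * ((q : ℚ) ^ 3 - (q : ℚ) ^ 2 - (q : ℚ) + 1) +
        (q : ℚ) ^ 2 * ((q : ℚ) ^ 3 + (q : ℚ) ^ 2 - (q : ℚ) - 1) := by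
    rw [hsum, hsum2]
    push_cast
    rw [hcast, hGq]
    ring
  refine ⟨hmain, ?_⟩
  have hcast2 : (Nat.card M2 : ℚ) = (q : ℚ) ^ 4 := by
    rw [Nat.card_eq_fintype_card]
    exact_mod_cast hcardM2
  rw [zeroProb, hmain, hcast2]
  have hq0 : (q : ℚ) ≠ 0 := Nat.cast_ne_zero.mpr (by omega)
  field_simp
  ring
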